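/- Let ℓ be an odd integer with ℓ ≥ 3, and let θ = e^{2/ℓ}. Then for every positive integer n: if n is even, M_θ(n) = (ℓ/2)·n − 1 (i.e., M_θ(n) = (ℓn − 2)/2), and if n is odd, M_θ(n) = (ℓn − 1)/2. -/

import Mathlib

open Real

/-- `M θ n = ⌊1 / {θ^(1/n)}⌋`, the integer part of the reciprocal of the
fractional part of the `n`-th root of `θ`. -/
noncomputable def M (θ : ℝ) (n : ℕ) : ℤ := ⌊1 / Int.fract (θ ^ ((n : ℝ)⁻¹))⌋

lemma exp_lt_pade {x : ℝ} (hx0 : 0 < x) (hx1 : x ≤ 1) :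
    Real.exp x < (2 + x) / (2 - x) := by
  have h := Real.exp_bound' hx0.le hx1 (n := 3) (by norm_num)
  have hs : (∑ m ∈ Finset.range 3, x ^ m / m.factorial) = 1 + x + x ^ 2 / 2 := by
    simp [Finset.sum_range_succ]
  rw [hs] at h
  have h2 : (0:ℝ) < 2 - x := by linarith
  rw [lt_div_iff₀ h2]
  have hb : exp x ≤ 1 + x + x ^ 2 / 2 + x ^ 3 * 4 / 18 := by
    convert h using 2
    norm_num [Nat.factorial]
  nlinarith [pow_pos hx0 3, pow_pos hx0 4, mul_le_mul_of_nonneg_right hb h2.le]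

theorem stmt_14 (ℓ : ℕ) (hodd : Odd ℓ) (hℓ : 3 ≤ ℓ) (θ : ℝ)
    (hθ : θ = Real.exp (2 / (ℓ : ℝ))) (n : ℕ) (hn : 1 ≤ n) :
    (Even n → 2 * M θ n = (ℓ : ℤ) * n - 2) ∧
    (Odd n → 2 * M θ n = (ℓ : ℤ) * n - 1) := by
  set m : ℕ := ℓ * n with hm
  have hm3 : 3 ≤ m := le_trans hℓ (Nat.le_mul_of_pos_right ℓ hn)
  have hmR : (3:ℝ) ≤ (m:ℝ) := by exact_mod_cast hm3
  have hmpos : (0:ℝ) < (m:ℝ) := by linarith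
  set x : ℝ := 2 / (m : ℝ) with hxdef
  have hx0 : 0 < x := by positivity
  have hx1 : x ≤ 1 := by
    rw [hxdef, div_le_one (by linarith)]; linarith
  -- θ ^ (n⁻¹) = exp x
  have hroot : θ ^ ((n : ℝ)⁻¹) = Real.exp x := by
    rw [hθ, ← Real.exp_mul]
    congr 1
    have hn0 : (n:ℝ) ≠ 0 := by positivity
    have hl0 : (ℓ:ℝ) ≠ 0 := by positivity
    rw [hxdef, hm]
    push_cast
    field_simp
  have hpade : Real.exp x < ((m:ℝ) + 1) / ((m:ℝ) - 1) := by
    have := exp_lt_pade hx0 hx1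
    have h2 : (2:ℝ) + x = ((m:ℝ) + 1) * (2 / m) := by
      rw [hxdef]; field_simp
    have h3 : (2:ℝ) - x = ((m:ℝ) - 1) * (2 / m) := by
      rw [hxdef]; field_simp
    rw [h2, h3, mul_div_mul_right _ _ (by positivity : (2:ℝ)/m ≠ 0)] at this
    exact this
  have hexp_lt2 : Real.exp x < 2 := by
    have : ((m:ℝ) + 1) / ((m:ℝ) - 1) ≤ 2 := by
      rw [div_le_iff₀ (by linarith)]; linarith
    linarith
  have hexp_gt : 1 + x < Real.exp x := by
    have := Real.add_one_lt_exp hx0.ne'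
    linarith
  have hexp_gt1 : 1 < Real.exp x := by linarith
  -- fract
  have hfl1 : ⌊Real.exp x⌋ = 1 := by
    rw [Int.floor_eq_iff]
    push_cast
    constructor <;> linarith
  have hfract : Int.fract (θ ^ ((n : ℝ)⁻¹)) = Real.exp x - 1 := by
    rw [hroot, Int.fract, hfl1]
    norm_num
  have hd0 : 0 < Real.exp x - 1 := by linarith
  set v : ℝ := 1 / (Real.exp x - 1) with hv
  have hM : M θ n = ⌊v⌋ := by rw [M, hfract]
  -- bounds on v
  have hd2 : ((m:ℝ) - 1) * (Real.exp x - 1) < 2 := by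
    have := (lt_div_iff₀ (show (0:ℝ) < (m:ℝ) - 1 by linarith)).mp hpade
    nlinarith
  have hd3 : 2 < (m:ℝ) * (Real.exp x - 1) := by
    have hid : (m:ℝ) * (2 / (m:ℝ)) = 2 := by field_simp
    have := mul_lt_mul_of_pos_left hexp_gt hmpos
    rw [hxdef] at this ⊢
    nlinarith
  have hlo : ((m:ℝ) - 1) / 2 < v := by
    rw [hv, lt_div_iff₀ hd0]
    linarith
  have hhi : v < (m:ℝ) / 2 := by
    rw [hv, div_lt_div_iff₀ hd0 (by norm_num : (0:ℝ) < 2)]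
    linarith
  constructor
  · intro hne
    have hme : Even m := hne.mul_left ℓ
    obtain ⟨k, hk⟩ := hme
    have hkR : (m:ℝ) = 2 * k := by rw [hk]; push_cast; ring
    rw [hkR] at hlo hhi
    have hfl : ⌊v⌋ = (k:ℤ) - 1 := by
      rw [Int.floor_eq_iff]
      push_cast
      constructor <;> linarith
    rw [hM, hfl]
    have hmc : (ℓ:ℤ) * n = 2 * (k:ℤ) := by exact_mod_cast (by omega : ℓ * n = 2 * k)
    omega
  · intro hno
    have hmo : Odd m := hodd.mul hno
    obtain ⟨k, hk⟩ := hmo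
    have hkR : (m:ℝ) = 2 * k + 1 := by rw [hk]; push_cast; ring
    rw [hkR] at hlo hhi
    have hfl : ⌊v⌋ = (k:ℤ) := by
      rw [Int.floor_eq_iff]
      push_cast
      constructor <;> linarith
    rw [hM, hfl]
    have hmc : (ℓ:ℤ) * n = 2 * (k:ℤ) + 1 := by exact_mod_cast (by omega : ℓ * n = 2 * k + 1)
    omega
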